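/- Let w be the n-th Engel word [x, y, y, ..., y] (y repeated n times) and let T be a finite metanilpotent group. If M is the subgroup generated by all w-values of T contained in the Fitting subgroup of T, then T/M is nilpotent. -/

import Mathlib

open scoped commutatorElement

/-- The iterated Engel commutator: `engelComm g a 0 = g`,
`engelComm g a (n+1) = ⁅engelComm g a n, a⁆`, so `engelComm g a n = [g,ₙ a]`. -/
def engelComm {G : Type*} [Group G] (g a : G) : ℕ → G
  | 0 => g
  | n + 1 => ⁅engelComm g a n, a⁆

/-- The Fitting subgroup: the join of all nilpotent normal subgroups. -/
def FittingSubgroup (T : Type) [Group T] : Subgroup T :=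
  ⨆ N ∈ {N : Subgroup T | N.Normal ∧ Group.IsNilpotent ↥N}, N

section EngelLemmas

variable {G : Type*} [Group G] {H : Type*} [Group H]

lemma engelComm_map (f : G →* H) (x g : G) (k : ℕ) :
    f (engelComm x g k) = engelComm (f x) (f g) k := by
  induction k with
  | zero => rfl
  | succ k ih =>
    show f ⁅engelComm x g k, g⁆ = ⁅engelComm (f x) (f g) k, f g⁆
    rw [map_commutatorElement, ih]

lemma engelComm_add (x g : G) (a b : ℕ) :
    engelComm x g (a + b) = engelComm (engelComm x g a) g b := by
  induction b with
  | zero => rfl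
  | succ b ih =>
    show ⁅engelComm x g (a + b), g⁆ = ⁅engelComm (engelComm x g a) g b, g⁆
    rw [ih]

lemma engelComm_mem_lcs (x g : G) (k : ℕ) :
    engelComm x g k ∈ (⊤ : Subgroup G).lowerCentralSeries k := by
  induction k with
  | zero => exact Subgroup.mem_top x
  | succ k ih =>
    have : (⊤ : Subgroup G).lowerCentralSeries (k + 1) = ⁅(⊤ : Subgroup G).lowerCentralSeries k, ⊤⁆ := rfl
    rw [this]
    exact Subgroup.commutator_mem_commutator ih (Subgroup.mem_top g)

lemma lcs_map_surjective (f : G →* H) (hf : Function.Surjective f) (k : ℕ) :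
    ((⊤ : Subgroup G).lowerCentralSeries k).map f = (⊤ : Subgroup H).lowerCentralSeries k := by
  induction k with
  | zero => exact Subgroup.map_top_of_surjective f hf
  | succ k ih =>
    have h1 : (⊤ : Subgroup G).lowerCentralSeries (k + 1) = ⁅(⊤ : Subgroup G).lowerCentralSeries k, ⊤⁆ := rfl
    have h2 : (⊤ : Subgroup H).lowerCentralSeries (k + 1) = ⁅(⊤ : Subgroup H).lowerCentralSeries k, ⊤⁆ := rfl
    rw [h1, h2, Subgroup.map_commutator, ih, Subgroup.map_top_of_surjective f hf]

end EngelLemmas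

section RingLemma

/-- In a ring where `p = 0`, a unipotent element of degree `m+1` has order dividing
`p ^ (m+1)`. -/
lemma pow_eq_one_of_unipotent {R : Type*} [Ring R] (p m : ℕ) (hp : p.Prime)
    (hpR : (p : R) = 0) (u : R) (h : (1 - u) ^ (m + 1) = 0) :
    u ^ (p ^ (m + 1)) = 1 := by
  set q := p ^ (m + 1) with hqdef
  have hqm : m + 1 ≤ q := Nat.le_of_lt (Nat.lt_pow_self hp.one_lt)
  have hce : u = -(1 - u) + 1 := by rw [neg_sub]; exact (sub_add_cancel u 1).symm
  rw [hce, (Commute.one_right (-(1 - u))).add_pow]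
  rw [Finset.sum_eq_single 0]
  · simp
  · intro i hi hi0
    rcases le_or_gt (m + 1) i with hge | hlt
    · have h2 : (1 - u) ^ i = 0 := by
        have h3 : (1 - u) ^ i = (1 - u) ^ (m + 1) * (1 - u) ^ (i - (m + 1)) := by
          rw [← pow_add, Nat.add_sub_cancel' hge]
        rw [h3, h, zero_mul]
      have hnp : (-(1 - u)) ^ i = (-1 : R) ^ i * (1 - u) ^ i := neg_pow _ _
      rw [hnp, h2, mul_zero, zero_mul, zero_mul]
    · have hiq : i ≠ q := by
        intro hiq'
        rw [hiq'] at hlt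
        omega
      have hdvd : p ∣ q.choose i := Nat.Prime.dvd_choose_pow hp hi0 hiq
      obtain ⟨e, he⟩ := hdvd
      have h4 : ((q.choose i : ℕ) : R) = 0 := by
        rw [he, Nat.cast_mul, hpR, zero_mul]
      rw [h4, mul_zero]
  · intro h5
    exact absurd (Finset.mem_range.mpr (by omega)) h5

end RingLemma

section Center

/-- In a finite solvable nontrivial group satisfying a global Engel condition,
the center is nontrivial. -/
lemma center_nontrivial_of_engel (G : Type*) [Group G] [Finite G] [Group.IsSolvable G]
    [Nontrivial G] (m : ℕ) (heng : ∀ x g : G, engelComm x g (m + 1) = 1) :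
    ∃ z : G, z ∈ Subgroup.center G ∧ z ≠ 1 := by
  classical
  -- find the last nontrivial term of the derived series
  obtain ⟨K, hK⟩ := Group.IsSolvable.solvable (G := G)
  have hKex : ∃ k, derivedSeries G k = ⊥ := ⟨K, hK⟩
  set K₀ := Nat.find hKex with hK₀def
  have hbot : derivedSeries G K₀ = ⊥ := Nat.find_spec hKex
  have hK₀pos : 0 < K₀ := by
    rcases Nat.eq_zero_or_pos K₀ with h | h
    · exfalso
      have := hbot
      rw [h, derivedSeries_zero] at this
      obtain ⟨x, hx⟩ := exists_ne (1 : G)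
      have : x ∈ (⊥ : Subgroup G) := this ▸ Subgroup.mem_top x
      exact hx (Subgroup.mem_bot.mp this)
    · exact h
  set A : Subgroup G := derivedSeries G (K₀ - 1) with hAdef
  have hAne : A ≠ ⊥ := Nat.find_min hKex (Nat.sub_lt hK₀pos one_pos)
  have hAA : ⁅A, A⁆ = ⊥ := by
    have : derivedSeries G (K₀ - 1 + 1) = ⁅A, A⁆ := derivedSeries_succ G (K₀ - 1)
    rw [Nat.sub_add_cancel hK₀pos] at this
    rw [← this, hbot]
  have hcomm : ∀ x ∈ A, ∀ y ∈ A, x * y = y * x := by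
    intro x hx y hy
    have : ⁅x, y⁆ ∈ (⊥ : Subgroup G) := hAA ▸ Subgroup.commutator_mem_commutator hx hy
    exact commutatorElement_eq_one_iff_mul_comm.mp (Subgroup.mem_bot.mp this)
  haveI hAnormal : A.Normal := derivedSeries_normal G _
  -- a prime dividing the order of A
  obtain ⟨a0, ha0A, ha0⟩ : ∃ x ∈ A, x ≠ (1 : G) := by
    rcases A.bot_or_exists_ne_one with h | h
    · exact absurd h hAne
    · exact h
  haveI : Nontrivial ↥A := ⟨⟨⟨a0, ha0A⟩, 1, by simp [ha0]⟩⟩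
  set p := (Nat.card ↥A).minFac with hpdef
  have hp : p.Prime := Nat.minFac_prime (by
    have := Finite.one_lt_card (α := ↥A)
    omega)
  haveI : Fact p.Prime := ⟨hp⟩
  obtain ⟨a, ha⟩ : ∃ a : ↥A, orderOf a = p :=
    exists_prime_orderOf_dvd_card' p (Nat.minFac_dvd _)
  -- the subgroup Ω of elements of A of order dividing p
  set Ω : Subgroup G :=
    { carrier := {x | x ∈ A ∧ x ^ p = 1}
      mul_mem' := by
        intro x y hx hy
        refine ⟨mul_mem hx.1 hy.1, ?_⟩
        have hc : Commute x y := hcomm x hx.1 y hy.1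
        rw [hc.mul_pow, hx.2, hy.2, one_mul]
      one_mem' := ⟨one_mem A, one_pow p⟩
      inv_mem' := by
        intro x hx
        exact ⟨inv_mem hx.1, by rw [inv_pow, hx.2, inv_one]⟩ } with hΩdef
  have hΩmem : ∀ x : G, x ∈ Ω ↔ x ∈ A ∧ x ^ p = 1 := fun x => Iff.rfl
  haveI hΩnormal : Ω.Normal := by
    constructor
    intro x hx g
    refine ⟨hAnormal.conj_mem x hx.1 g, ?_⟩
    have : (g * x * g⁻¹) ^ p = g * x ^ p * g⁻¹ := by
      rw [← MulAut.conj_apply, ← map_pow, MulAut.conj_apply]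
    rw [this, hx.2, mul_one, mul_inv_cancel]
  letI : CommGroup ↥Ω :=
    { (inferInstance : Group ↥Ω) with
      mul_comm := fun a b => Subtype.ext (hcomm _ a.2.1 _ b.2.1) }
  -- Endomorphism ring of Ω
  letI : AddCommGroup (Additive ↥Ω) := Additive.addCommGroup
  set R := AddMonoid.End (Additive ↥Ω) with hRdef
  -- conjugation endomorphisms
  have conj_mem : ∀ (g : G) (x : ↥Ω), g * (x : G) * g⁻¹ ∈ Ω :=
    fun g x => hΩnormal.conj_mem _ x.2 g
  set c : G → R := fun g =>
    AddMonoidHom.mk' (fun a => Additive.ofMul (⟨g * (a.toMul : G) * g⁻¹, conj_mem g a.toMul⟩ : ↥Ω))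
      (by
        intro x y
        apply Additive.toMul.injective
        apply Subtype.ext
        show g * ((x.toMul : G) * (y.toMul : G)) * g⁻¹ =
          (g * (x.toMul : G) * g⁻¹) * (g * (y.toMul : G) * g⁻¹)
        group) with hcdef
  have hc_apply : ∀ (g : G) (a : Additive ↥Ω),
      (((c g) a).toMul : G) = g * (a.toMul : G) * g⁻¹ := fun g a => rfl
  have hc_pow : ∀ (g : G) (k : ℕ) (a : Additive ↥Ω),
      (((c g ^ k) a).toMul : G) = g ^ k * (a.toMul : G) * (g ^ k)⁻¹ := by
    intro g k
    induction k with
    | zero => intro a; simp [pow_zero]; rfl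
    | succ k ih =>
      intro a
      rw [pow_succ']
      have : ((c g * c g ^ k) a) = (c g) ((c g ^ k) a) := rfl
      rw [this, hc_apply, ih, pow_succ']
      group
  set δ : G → R := fun g => 1 - c g with hδdef
  have hδ_apply : ∀ (g : G) (a : Additive ↥Ω),
      (((δ g) a).toMul : G) = ⁅(a.toMul : G), g⁆ := by
    intro g a
    have h1 : (δ g) a = a - (c g) a := by
      show ((1 : R) - c g) a = a - (c g) a
      rfl
    rw [h1]
    have h2 : (a - (c g) a).toMul = a.toMul / ((c g) a).toMul := rfl
    rw [h2]
    show ((a.toMul / ((c g) a).toMul : ↥Ω) : G) = _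
    rw [div_eq_mul_inv]
    push_cast
    rw [hc_apply]
    show (a.toMul : G) * (g * (a.toMul : G) * g⁻¹)⁻¹ = ⁅(a.toMul : G), g⁆
    rw [commutatorElement_def]
    group
  have hδ_pow : ∀ (g : G) (k : ℕ) (a : Additive ↥Ω),
      (((δ g ^ k) a).toMul : G) = engelComm ((a.toMul : G)) g k := by
    intro g k
    induction k with
    | zero => intro a; simp [pow_zero]; rfl
    | succ k ih =>
      intro a
      rw [pow_succ']
      have : ((δ g * δ g ^ k) a) = (δ g) ((δ g ^ k) a) := rfl
      rw [this, hδ_apply, ih]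
      rfl
  have hδm : ∀ g : G, (1 - c g) ^ (m + 1) = 0 := by
    intro g
    apply AddMonoidHom.ext
    intro a
    have h1 := hδ_pow g (m + 1) a
    rw [heng] at h1
    have h2 : (((1 - c g) ^ (m + 1) : R) a).toMul = 1 := Subtype.ext h1
    have h3 : ((0 : R) a).toMul = 1 := rfl
    apply Additive.toMul.injective
    exact h2.trans h3.symm
  -- p kills Ω
  have hpR : (p : R) = 0 := by
    apply AddMonoidHom.ext
    intro a
    have h1 : ((p : ℕ) : R) a = p • a := rfl
    refine h1.trans ?_
    apply Additive.toMul.injective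
    rw [toMul_nsmul]
    apply Subtype.ext
    show ((a.toMul : G)) ^ p = ((1 : ↥Ω) : G)
    rw [a.toMul.2.2]
    rfl
  -- binomial: conjugation by g^(p^(m+1)) is trivial on Ω
  set q := p ^ (m + 1) with hqdef
  have hcq : ∀ g : G, c g ^ q = 1 := by
    intro g
    exact pow_eq_one_of_unipotent p m hp hpR (c g) (hδm g)
  have hcentral : ∀ (g : G) (x : ↥Ω), g ^ q * (x : G) * (g ^ q)⁻¹ = (x : G) := by
    intro g x
    have h1 := hc_pow g q (Additive.ofMul x)
    rw [hcq g] at h1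
    have h2 : (((1 : R) (Additive.ofMul x)).toMul : G) = (x : G) := rfl
    rw [h2] at h1
    exact h1.symm
  -- the centralizer of Ω
  set C : Subgroup G := Subgroup.centralizer (Ω : Set G) with hCdef
  haveI hCnormal : C.Normal := by
    constructor
    intro x hx g
    rw [Subgroup.mem_centralizer_iff] at hx ⊢
    intro h hh
    have hh' : g⁻¹ * h * g ∈ Ω := by
      have := hΩnormal.conj_mem h hh g⁻¹
      simpa using this
    have h1 := hx _ hh'
    have h2 := congrArg (fun t => g * t * g⁻¹) h1
    calc h * (g * x * g⁻¹) = g * ((g⁻¹ * h * g) * x) * g⁻¹ := by group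
    _ = g * (x * (g⁻¹ * h * g)) * g⁻¹ := by rw [h1]
    _ = (g * x * g⁻¹) * h := by group
  -- action of G/C on Ω
  set f : G →* MulAut ↥Ω := MulAut.conjNormal with hfdef
  have hker : ∀ x ∈ C, f x = 1 := by
    intro x hx
    apply MulEquiv.ext
    intro ω
    apply Subtype.ext
    show x * (ω : G) * x⁻¹ = ((ω : ↥Ω) : G)
    have h1 := (Subgroup.mem_centralizer_iff.mp hx) (ω : G) ω.2
    rw [← h1]
    group
  set fbar : G ⧸ C →* MulAut ↥Ω := QuotientGroup.lift C f hker with hfbardef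
  letI : MulAction (G ⧸ C) ↥Ω := MulAction.compHom _ fbar
  have hsmul : ∀ (g : G) (ω : ↥Ω), (QuotientGroup.mk g : G ⧸ C) • ω = f g ω := fun g ω => rfl
  -- G/C is a p-group
  have hP : IsPGroup p (G ⧸ C) := by
    intro x
    obtain ⟨g, rfl⟩ := QuotientGroup.mk_surjective x
    refine ⟨m + 1, ?_⟩
    rw [← QuotientGroup.mk_pow]
    rw [QuotientGroup.eq_one_iff]
    rw [Subgroup.mem_centralizer_iff]
    intro h hh
    have := hcentral g ⟨h, hh⟩
    calc h * g ^ q = (g ^ q * h * (g ^ q)⁻¹) * g ^ q := by rw [this]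
    _ = g ^ q * h := by group
  -- counting fixed points
  have hmod := hP.card_modEq_card_fixedPoints ↥Ω
  have hpΩ : p ∣ Nat.card ↥Ω := by
    have hapow : ((a ^ p : ↥A) : G) = 1 := by rw [← ha, pow_orderOf_eq_one]; rfl
    have haΩ : (a : G) ∈ Ω := by
      refine ⟨a.2, ?_⟩
      have hcp : ((a ^ p : ↥A) : G) = (a : G) ^ p := SubmonoidClass.coe_pow a p
      rw [← hcp, hapow]
    set ω : ↥Ω := ⟨(a : G), haΩ⟩ with hωdef
    have hord : orderOf ω = p := by
      rw [← Subgroup.orderOf_coe ω]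
      show orderOf ((a : G)) = p
      rw [Subgroup.orderOf_coe a, ha]
    rw [← hord]
    exact orderOf_dvd_natCard ω
  have hfix : p ∣ Nat.card (MulAction.fixedPoints (G ⧸ C) ↥Ω) := by
    have h0 : Nat.card ↥Ω ≡ 0 [MOD p] := (Nat.modEq_zero_iff_dvd).mpr hpΩ
    exact (Nat.modEq_zero_iff_dvd).mp (hmod.symm.trans h0)
  have hone : (1 : ↥Ω) ∈ MulAction.fixedPoints (G ⧸ C) ↥Ω := by
    intro x
    obtain ⟨g, rfl⟩ := QuotientGroup.mk_surjective x
    rw [hsmul]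
    exact map_one (f g)
  have hcard1 : 0 < Nat.card (MulAction.fixedPoints (G ⧸ C) ↥Ω) := by
    have : Nonempty (MulAction.fixedPoints (G ⧸ C) ↥Ω) := ⟨⟨1, hone⟩⟩
    exact Nat.card_pos
  have hcard2 : 1 < Nat.card (MulAction.fixedPoints (G ⧸ C) ↥Ω) := by
    have hp2 := hp.two_le
    have hple := Nat.le_of_dvd hcard1 hfix
    omega
  haveI : Nontrivial (MulAction.fixedPoints (G ⧸ C) ↥Ω) :=
    Finite.one_lt_card_iff_nontrivial.mp hcard2
  -- extract a nontrivial fixed point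
  obtain ⟨u, v, huv⟩ := exists_pair_ne (MulAction.fixedPoints (G ⧸ C) ↥Ω)
  have hex : ∃ ω : ↥Ω, ω ∈ MulAction.fixedPoints (G ⧸ C) ↥Ω ∧ ω ≠ 1 := by
    by_cases hu : (u : ↥Ω) = 1
    · refine ⟨(v : ↥Ω), v.2, ?_⟩
      intro hv
      exact huv (Subtype.ext (by rw [hu, hv]))
    · exact ⟨(u : ↥Ω), u.2, hu⟩
  obtain ⟨ω, hωfix, hω1⟩ := hex
  refine ⟨(ω : G), ?_, ?_⟩
  · rw [Subgroup.mem_center_iff]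
    intro g
    have h1 := hωfix (QuotientGroup.mk g)
    rw [hsmul] at h1
    have h2 : f g ω = ω := h1
    have h3 : g * (ω : G) * g⁻¹ = (ω : G) := by
      rw [hfdef] at h2
      have h4 := congrArg (fun t : ↥Ω => (t : G)) h2
      simpa [MulAut.conjNormal_apply] using h4
    calc g * (ω : G) = (g * (ω : G) * g⁻¹) * g := by group
    _ = (ω : G) * g := by rw [h3]
  · intro h
    exact hω1 (Subtype.ext h)

end Center

section Zorn

/-- Zorn's theorem for finite solvable groups: a finite solvable bounded-Engel
group is nilpotent. -/
lemma isNilpotent_of_engel : ∀ (k : ℕ) (G : Type) [Group G] [Finite G] [Group.IsSolvable G],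
    Nat.card G ≤ k → ∀ (m : ℕ), (∀ x g : G, engelComm x g m = 1) → Group.IsNilpotent G := by
  intro k
  induction k with
  | zero =>
    intro G _ _ _ hcard m _
    exact absurd hcard (by have := Nat.card_pos (α := G); omega)
  | succ k ih =>
    intro G _ _ _ hcard m heng
    by_cases hG : Subsingleton G
    · refine ⟨0, ?_⟩
      rw [upperCentralSeries_zero]
      ext x
      simp [Subsingleton.elim x 1]
    · haveI : Nontrivial G := not_subsingleton_iff_nontrivial.mp hG
      have heng' : ∀ x g : G, engelComm x g (m + 1) = 1 := by
        intro x g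
        show ⁅engelComm x g m, g⁆ = 1
        rw [heng x g]
        exact commutatorElement_one_left g
      obtain ⟨z, hz, hz1⟩ := center_nontrivial_of_engel G m heng'
      set Z := Subgroup.center G
      haveI : Nontrivial ↥Z := ⟨⟨⟨z, hz⟩, 1, by simp [hz1]⟩⟩
      have hcq : Nat.card (G ⧸ Z) ≤ k := by
        have h1 : Nat.card G = Nat.card (G ⧸ Z) * Nat.card ↥Z :=
          Subgroup.card_eq_card_quotient_mul_card_subgroup Z
        have h2 : 2 ≤ Nat.card ↥Z := Finite.one_lt_card
        have h3 : 0 < Nat.card (G ⧸ Z) := Nat.card_pos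
        have h4 : Nat.card (G ⧸ Z) * 2 ≤ Nat.card (G ⧸ Z) * Nat.card ↥Z :=
          Nat.mul_le_mul_left _ h2
        omega
      have hengQ : ∀ x g : G ⧸ Z, engelComm x g (m + 1) = 1 := by
        intro x g
        obtain ⟨x₀, rfl⟩ := QuotientGroup.mk_surjective x
        obtain ⟨g₀, rfl⟩ := QuotientGroup.mk_surjective g
        have h1 := engelComm_map (QuotientGroup.mk' Z) x₀ g₀ (m + 1)
        rw [heng' x₀ g₀, map_one] at h1
        exact h1.symm
      have hnilQ : Group.IsNilpotent (G ⧸ Z) := ih (G ⧸ Z) hcq (m + 1) hengQ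
      exact of_quotient_center_nilpotent hnilQ

end Zorn

/-- Let `w` be the `n`-th Engel word (`n ≥ 1`) and `T` a finite metanilpotent
group.  If `M` is the subgroup generated by all `w`-values of `T` contained in
the Fitting subgroup of `T`, then `T/M` is nilpotent, i.e. some term of the
lower central series of `T` is contained in `M`. -/
theorem stmt8 (n : ℕ) (hn : 1 ≤ n) (T : Type) [Group T] [Finite T]
    (hmeta : ∃ N : Subgroup T, N.Normal ∧ Group.IsNilpotent ↥N ∧
      ∃ c, (⊤ : Subgroup T).lowerCentralSeries c ≤ N) :
    ∃ c, (⊤ : Subgroup T).lowerCentralSeries c ≤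
      Subgroup.closure
        {g : T | (∃ t s : T, g = engelComm t s n) ∧ g ∈ FittingSubgroup T} := by
  classical
  obtain ⟨N, hNnorm, hNnil, c, hc⟩ := hmeta
  set S := {g : T | (∃ t s : T, g = engelComm t s n) ∧ g ∈ FittingSubgroup T} with hSdef
  set M := Subgroup.closure S with hMdef
  -- the Fitting subgroup is normal
  have hFit : ∀ (g : T), ∀ x ∈ FittingSubgroup T, g * x * g⁻¹ ∈ FittingSubgroup T := by
    intro g x hx
    have hle : FittingSubgroup T ≤
        Subgroup.comap (MulAut.conj g).toMonoidHom (FittingSubgroup T) := by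
      apply iSup₂_le
      intro N' hN' y hy
      have h1 : g * y * g⁻¹ ∈ N' := hN'.1.conj_mem y hy g
      have h2 : N' ≤ FittingSubgroup T :=
        fun z hz => Subgroup.mem_iSup_of_mem N' (Subgroup.mem_iSup_of_mem hN' hz)
      simpa [Subgroup.mem_comap, MulAut.conj_apply] using h2 h1
    simpa [Subgroup.mem_comap, MulAut.conj_apply] using hle hx
  -- N is contained in the Fitting subgroup
  have hNFit : N ≤ FittingSubgroup T :=
    fun x hx => Subgroup.mem_iSup_of_mem N (Subgroup.mem_iSup_of_mem ⟨hNnorm, hNnil⟩ hx)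
  -- M is normal
  haveI hMnormal : M.Normal := by
    constructor
    intro x hx g
    set φ := (MulAut.conj g).toMonoidHom with hφdef
    have himg : φ '' S ⊆ S := by
      rintro _ ⟨y, ⟨⟨t, s, rfl⟩, hyFit⟩, rfl⟩
      constructor
      · exact ⟨φ t, φ s, engelComm_map φ t s n⟩
      · exact hFit g _ hyFit
    have h1 : φ x ∈ Subgroup.map φ M := ⟨x, hx, rfl⟩
    rw [hMdef, MonoidHom.map_closure] at h1
    have h2 : Subgroup.closure (φ '' S) ≤ M :=
      (Subgroup.closure_le _).mpr (himg.trans Subgroup.subset_closure)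
    exact h2 h1
  -- T is solvable
  haveI : Group.IsSolvable ↥N := by
    haveI := hNnil
    infer_instance
  haveI : Group.IsNilpotent (T ⧸ N) := by
    rw [Subgroup.nilpotent_iff_lowerCentralSeries]
    refine ⟨c, ?_⟩
    rw [← lcs_map_surjective (QuotientGroup.mk' N) (QuotientGroup.mk'_surjective N) c]
    rw [Subgroup.map_eq_bot_iff, QuotientGroup.ker_mk']
    exact hc
  haveI : Group.IsSolvable T := by
    apply solvable_of_ker_le_range N.subtype (QuotientGroup.mk' N)
    rw [QuotientGroup.ker_mk', Subgroup.range_subtype]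
  haveI : Group.IsSolvable (T ⧸ M) := inferInstance
  -- the quotient is (c+n)-Engel
  set mk : T →* T ⧸ M := QuotientGroup.mk' M with hmkdef
  have hmksurj : Function.Surjective mk := QuotientGroup.mk'_surjective M
  have hengQ : ∀ x g : T ⧸ M, engelComm x g (c + n) = 1 := by
    intro x g
    rw [engelComm_add]
    obtain ⟨g₀, rfl⟩ := hmksurj g
    have hmem : engelComm x (mk g₀) c ∈ (⊤ : Subgroup (T ⧸ M)).lowerCentralSeries c :=
      engelComm_mem_lcs x (mk g₀) c
    rw [← lcs_map_surjective mk hmksurj c] at hmem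
    obtain ⟨t₀, ht₀, hteq⟩ := hmem
    have htN : t₀ ∈ N := hc ht₀
    rw [← hteq, ← engelComm_map]
    -- the w-value lies in N, hence in the Fitting subgroup
    have hwN : ∀ j : ℕ, engelComm t₀ g₀ j ∈ N := by
      intro j
      induction j with
      | zero => exact htN
      | succ j ihj =>
        show ⁅engelComm t₀ g₀ j, g₀⁆ ∈ N
        rw [commutatorElement_def]
        have h1 : engelComm t₀ g₀ j * g₀ * (engelComm t₀ g₀ j)⁻¹ * g₀⁻¹ =
            engelComm t₀ g₀ j * (g₀ * (engelComm t₀ g₀ j)⁻¹ * g₀⁻¹) := by group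
        rw [h1]
        exact mul_mem ihj (hNnorm.conj_mem _ (inv_mem ihj) g₀)
    have hwS : engelComm t₀ g₀ n ∈ S := ⟨⟨t₀, g₀, rfl⟩, hNFit (hwN n)⟩
    have hwM : engelComm t₀ g₀ n ∈ M := Subgroup.subset_closure hwS
    show mk (engelComm t₀ g₀ n) = 1
    rwa [hmkdef, ← MonoidHom.mem_ker, QuotientGroup.ker_mk']
  -- the quotient is nilpotent
  have hnilQ : Group.IsNilpotent (T ⧸ M) :=
    isNilpotent_of_engel (Nat.card (T ⧸ M)) (T ⧸ M) le_rfl (c + n) hengQ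
  obtain ⟨d, hd⟩ := Subgroup.nilpotent_iff_lowerCentralSeries.mp hnilQ
  refine ⟨d, ?_⟩
  intro x hx
  have h1 : mk x ∈ (⊤ : Subgroup (T ⧸ M)).lowerCentralSeries d := by
    rw [← lcs_map_surjective mk hmksurj d]
    exact ⟨x, hx, rfl⟩
  rw [hd, Subgroup.mem_bot] at h1
  have h2 : x ∈ MonoidHom.ker mk := h1
  rwa [hmkdef, QuotientGroup.ker_mk'] at h2
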